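/- For every hypergraph H with n vertices, the conflict-free choice number satisfies ch_cf(H) ≤ χ_cf(H)·ln n + 1. -/

import Mathlib

lemma cf_key {V : Type} [Fintype V] [DecidableEq V] (χ k : ℕ)
    (c : V → Fin χ) (L : V → Finset ℕ) (hL : ∀ v, k ≤ (L v).card)
    (hcard : Fintype.card V * (χ - 1) ^ k < χ ^ k) :
    ∃ C : V → ℕ, (∀ v, C v ∈ L v) ∧ ∀ u v, C u = C v → c u = c v := by
  rcases isEmpty_or_nonempty V with hV | hV
  · exact ⟨fun v => hV.elim v, fun v => hV.elim v, fun u => hV.elim u⟩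
  have hχ : 0 < χ := (c Classical.ofNonempty).pos
  -- shrink each list to exactly k elements
  have hL' : ∀ v, ∃ t ⊆ L v, t.card = k := fun v => Finset.exists_subset_card_eq (hL v)
  choose L' hL'sub hL'card using hL'
  set A : Finset ℕ := Finset.univ.biUnion L' with hA
  have hsub : ∀ v, L' v ⊆ A := fun v => Finset.subset_biUnion_of_mem L' (Finset.mem_univ v)
  set Bad : V → Finset (↥A → Fin χ) := fun v =>
    Fintype.piFinset (fun a : ↥A => if (a : ℕ) ∈ L' v then {c v}ᶜ else Finset.univ) with hBad
  have hmv : ∀ v, (Finset.univ.filter fun a : ↥A => (a : ℕ) ∈ L' v).card = k := by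
    intro v
    rw [← hL'card v]
    refine Finset.card_bij (fun (a : ↥A) _ => (a : ℕ)) ?_ ?_ ?_
    · intro a ha; simpa using (Finset.mem_filter.mp ha).2
    · intro a _ b _ h; exact Subtype.ext h
    · intro b hb; exact ⟨⟨b, hsub v hb⟩, by simpa using hb, rfl⟩
  have hkA : k ≤ A.card := by
    have := hmv Classical.ofNonempty
    calc k = _ := (hmv Classical.ofNonempty).symm
    _ ≤ (Finset.univ : Finset ↥A).card := Finset.card_filter_le _ _
    _ = A.card := by simp
  have hBadcard : ∀ v, (Bad v).card = (χ - 1) ^ k * χ ^ (A.card - k) := by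
    intro v
    rw [hBad]
    rw [Fintype.card_piFinset]
    have h1 : ∀ a : ↥A, (if (a : ℕ) ∈ L' v then ({c v}ᶜ : Finset (Fin χ)) else Finset.univ).card
        = if (a : ℕ) ∈ L' v then χ - 1 else χ := by
      intro a
      split <;> simp [Finset.card_compl]
    simp only [h1]
    rw [Finset.prod_ite, Finset.prod_const, Finset.prod_const, hmv v]
    congr 2
    rw [Finset.filter_not, Finset.card_sdiff_of_subset (Finset.filter_subset _ _), hmv v]
    simp
  -- union bound
  have hUnion : (Finset.univ.biUnion Bad).card < Fintype.card (↥A → Fin χ) := by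
    calc (Finset.univ.biUnion Bad).card ≤ ∑ v : V, (Bad v).card :=
          Finset.card_biUnion_le
    _ = Fintype.card V * ((χ - 1) ^ k * χ ^ (A.card - k)) := by
          simp [hBadcard]
    _ < χ ^ k * χ ^ (A.card - k) := by
          rw [← mul_assoc]
          exact (Nat.mul_lt_mul_right (pow_pos hχ _)).mpr hcard
    _ = χ ^ A.card := by rw [← pow_add]; congr 1; omega
    _ = Fintype.card (↥A → Fin χ) := by simp [Fintype.card_fun]
  obtain ⟨f, hf⟩ : ∃ f : ↥A → Fin χ, f ∉ Finset.univ.biUnion Bad := by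
    by_contra h
    push_neg at h
    have h2 : Fintype.card (↥A → Fin χ) ≤ (Finset.univ.biUnion Bad).card := by
      rw [← Finset.card_univ]
      exact Finset.card_le_card (fun f _ => h f)
    omega
  have hgood : ∀ v, ∃ a : ↥A, (a : ℕ) ∈ L' v ∧ f a = c v := by
    intro v
    have : f ∉ Bad v := fun hb => hf (Finset.mem_biUnion.mpr ⟨v, Finset.mem_univ v, hb⟩)
    rw [hBad] at this
    simp only [Fintype.mem_piFinset] at this
    push_neg at this
    obtain ⟨a, ha⟩ := this
    by_cases hmem : (a : ℕ) ∈ L' v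
    · rw [if_pos hmem] at ha
      simp only [Finset.mem_compl, Finset.mem_singleton, not_not] at ha
      exact ⟨a, hmem, ha⟩
    · rw [if_neg hmem] at ha
      exact absurd (Finset.mem_univ _) ha
  choose a hamem haf using hgood
  refine ⟨fun v => (a v : ℕ), fun v => hL'sub v (hamem v), fun u v huv => ?_⟩
  have : a u = a v := Subtype.ext huv
  rw [← haf u, ← haf v, this]

lemma cf_count (n χ : ℕ) (hn : 1 ≤ n) (hχ : 2 ≤ χ)
    (k : ℕ) (hk : (χ : ℝ) * Real.log n < k) :
    n * (χ - 1) ^ k < χ ^ k := by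
  have hx0 : (0:ℝ) < χ := by positivity
  have hn0 : (0:ℝ) < n := by positivity
  have hx1 : (1:ℝ) ≤ (χ:ℝ) - 1 := by
    have : (2:ℝ) ≤ (χ:ℝ) := by exact_mod_cast hχ
    linarith
  have hfrac : (0:ℝ) < ((χ:ℝ) - 1) / χ := by positivity
  have hlog : Real.log (((χ:ℝ) - 1) / χ) ≤ -1 / χ := by
    have h1 := Real.log_le_sub_one_of_pos hfrac
    have h2 : ((χ:ℝ) - 1) / χ - 1 = -1 / χ := by field_simp; ring
    linarith
  have hkx : Real.log n < (k : ℝ) / χ := by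
    rw [lt_div_iff₀ hx0]
    calc Real.log n * χ = χ * Real.log n := by ring
    _ < k := hk
  have hstep : (k : ℝ) * Real.log (((χ:ℝ) - 1) / χ) < -Real.log n := by
    have hk0 : (0:ℝ) ≤ k := Nat.cast_nonneg k
    calc (k : ℝ) * Real.log (((χ:ℝ) - 1) / χ) ≤ (k:ℝ) * (-1 / χ) := by
          exact mul_le_mul_of_nonneg_left hlog hk0
    _ = -((k:ℝ) / χ) := by ring
    _ < -Real.log n := by linarith
  have hexp : (((χ:ℝ) - 1) / χ) ^ k < 1 / n := by
    have e1 : (((χ:ℝ) - 1) / χ) ^ k = Real.exp ((k:ℝ) * Real.log (((χ:ℝ) - 1) / χ)) := by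
      rw [Real.exp_nat_mul, Real.exp_log hfrac]
    rw [e1]
    calc Real.exp ((k:ℝ) * Real.log (((χ:ℝ) - 1) / χ)) < Real.exp (-Real.log n) :=
          Real.exp_lt_exp.mpr hstep
    _ = 1 / n := by rw [Real.exp_neg, Real.exp_log hn0, one_div]
  have hreal : (n:ℝ) * ((χ:ℝ) - 1) ^ k < (χ:ℝ) ^ k := by
    rw [div_pow] at hexp
    rw [div_lt_div_iff₀ (by positivity) hn0] at hexp
    nlinarith [pow_pos hx0 k]
  have hcast : ((χ:ℝ) - 1) = ((χ - 1 : ℕ) : ℝ) := by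
    have : 1 ≤ χ := by omega
    push_cast [this]
    ring
  rw [hcast] at hreal
  exact_mod_cast hreal

/-- For every hypergraph `H` with `n` vertices, the conflict-free choice number is
at most `χ_cf(H) · ln n + 1`. -/
theorem cf_choice_le_cf_chromatic_mul_log {V : Type} [Fintype V] [DecidableEq V]
    (E : Finset (Finset V)) :
    ((sInf {k : ℕ | ∀ L : V → Finset ℕ, (∀ v, k ≤ (L v).card) →
        ∃ C : V → ℕ, (∀ v, C v ∈ L v) ∧
          ∀ S ∈ E, S.Nonempty → ∃ v ∈ S, ∀ u ∈ S, u ≠ v → C u ≠ C v} : ℕ) : ℝ)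
      ≤ ((sInf {k : ℕ | ∃ C : V → ℕ, (∀ v, C v ∈ Finset.Icc 1 k) ∧
          ∀ S ∈ E, S.Nonempty → ∃ v ∈ S, ∀ u ∈ S, u ≠ v → C u ≠ C v} : ℕ) : ℝ)
          * Real.log (Fintype.card V) + 1 := by
  rcases isEmpty_or_nonempty V with hV | hV
  · have h0 : 0 ∈ {k : ℕ | ∀ L : V → Finset ℕ, (∀ v, k ≤ (L v).card) →
        ∃ C : V → ℕ, (∀ v, C v ∈ L v) ∧
          ∀ S ∈ E, S.Nonempty → ∃ v ∈ S, ∀ u ∈ S, u ≠ v → C u ≠ C v} := by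
      intro L _
      exact ⟨fun _ => 0, fun v => hV.elim v, fun S _ hne => (hV.elim hne.choose)⟩
    rw [Nat.sInf_eq_zero.mpr (Or.inl h0)]
    have : (Fintype.card V : ℝ) = 0 := by simp [Fintype.card_eq_zero]
    rw [this, Real.log_zero]
    norm_num
  · set n := Fintype.card V with hn
    have hn1 : 1 ≤ n := Fintype.card_pos
    set RS := {k : ℕ | ∃ C : V → ℕ, (∀ v, C v ∈ Finset.Icc 1 k) ∧
          ∀ S ∈ E, S.Nonempty → ∃ v ∈ S, ∀ u ∈ S, u ≠ v → C u ≠ C v} with hRSdef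
    have hnRS : n ∈ RS := by
      refine ⟨fun v => (Fintype.equivFin V v : ℕ) + 1, fun v => ?_, fun S _ hne => ?_⟩
      · simp only [Finset.mem_Icc]
        constructor
        · omega
        · have := (Fintype.equivFin V v).isLt
          omega
      · obtain ⟨v, hv⟩ := hne
        refine ⟨v, hv, fun u _ hne' heq => hne' ?_⟩
        have heq' : (Fintype.equivFin V u : ℕ) + 1 = (Fintype.equivFin V v : ℕ) + 1 := heq
        have : Fintype.equivFin V u = Fintype.equivFin V v := Fin.ext (by omega)
        exact (Fintype.equivFin V).injective this
    set χ := sInf RS with hχdef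
    have hχmem : χ ∈ RS := Nat.sInf_mem ⟨n, hnRS⟩
    obtain ⟨C₀, hC₀mem, hC₀cf⟩ := hχmem
    have hχ1 : 1 ≤ χ := by
      have := hC₀mem (Classical.ofNonempty)
      simp only [Finset.mem_Icc] at this
      omega
    set k := ⌊(χ:ℝ) * Real.log n⌋₊ + 1 with hkdef
    have hklt : (χ:ℝ) * Real.log n < k := by
      rw [hkdef]
      push_cast
      exact Nat.lt_floor_add_one _
    have hcard : n * (χ - 1) ^ k < χ ^ k := by
      rcases eq_or_lt_of_le hχ1 with h1 | h2
      · rw [← h1]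
        simp [zero_pow (show k ≠ 0 by omega)]
      · exact cf_count n χ hn1 h2 k hklt
    have hkmem : k ∈ {k : ℕ | ∀ L : V → Finset ℕ, (∀ v, k ≤ (L v).card) →
        ∃ C : V → ℕ, (∀ v, C v ∈ L v) ∧
          ∀ S ∈ E, S.Nonempty → ∃ v ∈ S, ∀ u ∈ S, u ≠ v → C u ≠ C v} := by
      intro L hL
      have hc : ∀ v, C₀ v - 1 < χ := by
        intro v
        have := hC₀mem v
        simp only [Finset.mem_Icc] at this
        omega
      obtain ⟨C, hCmem, hCref⟩ := cf_key χ k (fun v => ⟨C₀ v - 1, hc v⟩) L hL hcard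
      refine ⟨C, hCmem, fun S hS hne => ?_⟩
      obtain ⟨v, hv, hun⟩ := hC₀cf S hS hne
      refine ⟨v, hv, fun u hu hne' heq => hun u hu hne' ?_⟩
      have h3 := hCref u v heq
      have h4 : C₀ u - 1 = C₀ v - 1 := congrArg Fin.val h3
      have h5 := hC₀mem u
      have h6 := hC₀mem v
      simp only [Finset.mem_Icc] at h5 h6
      omega
    have hle : sInf {k : ℕ | ∀ L : V → Finset ℕ, (∀ v, k ≤ (L v).card) →
        ∃ C : V → ℕ, (∀ v, C v ∈ L v) ∧
          ∀ S ∈ E, S.Nonempty → ∃ v ∈ S, ∀ u ∈ S, u ≠ v → C u ≠ C v} ≤ k :=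
      Nat.sInf_le hkmem
    have hfloor : (⌊(χ:ℝ) * Real.log n⌋₊ : ℝ) ≤ (χ:ℝ) * Real.log n :=
      Nat.floor_le (mul_nonneg (Nat.cast_nonneg χ) (Real.log_nonneg (by exact_mod_cast hn1)))
    calc ((sInf _ : ℕ) : ℝ) ≤ (k : ℝ) := by exact_mod_cast hle
    _ = (⌊(χ:ℝ) * Real.log n⌋₊ : ℝ) + 1 := by rw [hkdef]; push_cast; ring
    _ ≤ (χ:ℝ) * Real.log n + 1 := by linarith
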